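/- Let R be a reduced ring that satisfies the ACC on annihilators and is left Archimedean. Then the power series ring R[[x]] is reduced and left Archimedean. -/

import Mathlib

/-- A ring `R` is *left Archimedean* if for every nonunit `a ∈ R`,
`⋂ n, aⁿ·R = {0}`. -/
def LeftArchimedean (R : Type*) [Ring R] : Prop :=
  ∀ a : R, ¬ IsUnit a → (⋂ n : ℕ, {x : R | ∃ r : R, x = a ^ n * r}) = {0}

/-- A ring `R` satisfies the *ACC on annihilators* if every ascending chain of
annihilator ideals `Ann(S) = {r | ∀ s ∈ S, s * r = 0}` stabilizes. -/
def AccOnAnnihilators (R : Type*) [Ring R] : Prop :=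
  ∀ f : ℕ → Set R,
    (∀ n, ∃ S : Set R, f n = {r : R | ∀ s ∈ S, s * r = 0}) →
    (∀ n, f n ⊆ f (n + 1)) →
    ∃ N, ∀ n, N ≤ n → f n = f N

/-! ### Auxiliary lemmas about reduced rings -/

section Reduced
variable {R : Type*} [Ring R] [IsReduced R]

lemma aux_red_symm {a b : R} (h : a * b = 0) : b * a = 0 := by
  have h2 : (b * a) * (b * a) = 0 := by
    calc (b * a) * (b * a) = b * ((a * b) * a) := by simp only [mul_assoc]
    _ = 0 := by rw [h, zero_mul, mul_zero]
  exact IsReduced.eq_zero _ ⟨2, by rwa [sq]⟩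

lemma aux_red_mid {a b : R} (h : a * b = 0) (x : R) : a * (x * b) = 0 := by
  have hba : b * a = 0 := aux_red_symm h
  have h2 : (a * (x * b)) * (a * (x * b)) = 0 := by
    have hb : b * (a * (x * b)) = 0 := by rw [← mul_assoc, hba, zero_mul]
    calc (a * (x * b)) * (a * (x * b)) = a * (x * (b * (a * (x * b)))) := by
          simp only [mul_assoc]
    _ = 0 := by rw [hb, mul_zero, mul_zero]
  exact IsReduced.eq_zero _ ⟨2, by rwa [sq]⟩

lemma aux_c_pow_coeff {c : R} {F : PowerSeries R}
    (hca : c * (PowerSeries.constantCoeff F) = 0) :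
    ∀ n i, i < n → c * (PowerSeries.coeff i (F ^ n)) = 0 := by
  intro n
  induction n with
  | zero => intro i hi; omega
  | succ n ih =>
    intro i hi
    rw [pow_succ, PowerSeries.coeff_mul, Finset.mul_sum]
    apply Finset.sum_eq_zero
    rintro ⟨p, q⟩ hpq
    rw [Finset.HasAntidiagonal.mem_antidiagonal] at hpq
    by_cases hp : p < n
    · rw [← mul_assoc, ih p hp, zero_mul]
    · have hq : q = 0 := by omega
      subst hq
      rw [PowerSeries.coeff_zero_eq_constantCoeff]
      exact aux_red_mid hca _

lemma aux_ps_sq_zero (f : PowerSeries R) (h : f * f = 0) : f = 0 := by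
  ext n
  rw [map_zero]
  induction n using Nat.strong_induction_on with
  | _ n ih =>
    have h2 : PowerSeries.coeff (n + n) (f * f) = 0 := by rw [h, map_zero]
    rw [PowerSeries.coeff_mul] at h2
    have hs : ∑ p ∈ Finset.HasAntidiagonal.antidiagonal (n + n),
        PowerSeries.coeff p.1 f * PowerSeries.coeff p.2 f
        = PowerSeries.coeff n f * PowerSeries.coeff n f := by
      apply Finset.sum_eq_single_of_mem (n, n)
      · rw [Finset.HasAntidiagonal.mem_antidiagonal]
      · rintro ⟨p, q⟩ hb hne
        rw [Finset.HasAntidiagonal.mem_antidiagonal] at hb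
        rcases lt_or_ge p n with hp | hp
        · rw [ih p hp, zero_mul]
        · have hq : q < n := by
            rcases eq_or_lt_of_le hp with he | hl
            · exact absurd (by simp [← he]; omega : (p, q) = (n, n)) hne
            · omega
          rw [ih q hq, mul_zero]
    rw [hs] at h2
    exact IsReduced.eq_zero _ ⟨2, by rwa [sq]⟩

lemma aux_ps_pow_zero : ∀ (n : ℕ) (f : PowerSeries R), f ^ (n + 1) = 0 → f = 0 := by
  intro n
  induction n with
  | zero => intro f hf; simpa using hf
  | succ n ih =>
    intro f hf
    apply ih
    apply aux_ps_sq_zero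
    have h2 : f ^ (n + 1) * f ^ (n + 1) = f ^ (n + 2) * f ^ n := by
      rw [← pow_add, ← pow_add]; congr 1; omega
    rw [h2, hf, zero_mul]

lemma aux_ps_isReduced : IsReduced (PowerSeries R) := by
  constructor
  rintro f ⟨n, hn⟩
  match n with
  | 0 =>
    have h1 : (1 : PowerSeries R) = 0 := by simpa using hn
    calc f = f * 1 := (mul_one f).symm
    _ = 0 := by rw [h1, mul_zero]
  | (k + 1) => exact aux_ps_pow_zero k f hn

end Reduced

/-! ### Units of power series over a (possibly noncommutative) ring -/

section Units
variable {S : Type*} [Ring S]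

noncomputable def auxRinvC (φ : ℕ → S) (v : S) : ℕ → S
  | 0 => v
  | (k + 1) => -(v * ∑ j ∈ Finset.range (k + 1), φ (j + 1) * auxRinvC φ v (k - j))
termination_by n => n
decreasing_by omega

noncomputable def auxLinvC (φ : ℕ → S) (v : S) : ℕ → S
  | 0 => v
  | (k + 1) => -((∑ j ∈ Finset.range (k + 1), auxLinvC φ v (k - j) * φ (j + 1)) * v)
termination_by n => n
decreasing_by omega

lemma aux_isUnit_of_isUnit_constantCoeff (F : PowerSeries S)
    (h : IsUnit (PowerSeries.constantCoeff F)) : IsUnit F := by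
  obtain ⟨u, hu⟩ := h
  set a : S := PowerSeries.constantCoeff F with ha
  set φ : ℕ → S := fun n => PowerSeries.coeff n F with hφ
  set v : S := ↑u⁻¹ with hv
  have hav : a * v = 1 := by rw [← hu]; exact u.mul_inv
  have hva : v * a = 1 := by rw [← hu]; exact u.inv_mul
  set B : PowerSeries S := PowerSeries.mk (auxRinvC φ v) with hB
  set B' : PowerSeries S := PowerSeries.mk (auxLinvC φ v) with hB'
  have hcB : ∀ j, PowerSeries.coeff j B = auxRinvC φ v j := fun j => PowerSeries.coeff_mk j _
  have hcB' : ∀ j, PowerSeries.coeff j B' = auxLinvC φ v j := fun j => PowerSeries.coeff_mk j _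
  have hcF : ∀ j, PowerSeries.coeff j F = φ j := fun j => rfl
  have hFB : F * B = 1 := by
    ext n
    cases n with
    | zero =>
      have hB0 : PowerSeries.constantCoeff B = v := by
        rw [← PowerSeries.coeff_zero_eq_constantCoeff, hcB]
        rw [auxRinvC]
      simp only [PowerSeries.coeff_zero_eq_constantCoeff, RingHom.map_mul, RingHom.map_one]
      rw [hB0, ← ha]
      exact hav
    | succ n =>
      rw [PowerSeries.coeff_mul, Finset.Nat.sum_antidiagonal_eq_sum_range_succ_mk,
        Finset.sum_range_succ']
      rw [PowerSeries.coeff_one, if_neg (Nat.succ_ne_zero n)]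
      have hsum : ∀ k ∈ Finset.range (n + 1),
          PowerSeries.coeff (k + 1, n + 1 - (k + 1)).1 F *
            PowerSeries.coeff (k + 1, n + 1 - (k + 1)).2 B
          = φ (k + 1) * auxRinvC φ v (n - k) := by
        intro k hk
        show PowerSeries.coeff (k + 1) F * PowerSeries.coeff (n + 1 - (k + 1)) B = _
        rw [hcB, hcF]
        congr 2
        omega
      rw [Finset.sum_congr rfl hsum]
      have hlast : PowerSeries.coeff (0, n + 1 - 0).1 F *
          PowerSeries.coeff (0, n + 1 - 0).2 B
          = a * auxRinvC φ v (n + 1) := by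
        show PowerSeries.coeff 0 F * PowerSeries.coeff (n + 1) B = _
        rw [hcB, PowerSeries.coeff_zero_eq_constantCoeff, ← ha]
      rw [hlast]
      rw [show auxRinvC φ v (n + 1)
          = -(v * ∑ j ∈ Finset.range (n + 1), φ (j + 1) * auxRinvC φ v (n - j)) from by
        rw [auxRinvC]]
      set T := ∑ j ∈ Finset.range (n + 1), φ (j + 1) * auxRinvC φ v (n - j) with hT
      rw [mul_neg, ← mul_assoc, hav, one_mul, add_neg_cancel]
  have hB'F : B' * F = 1 := by
    ext n
    cases n with
    | zero =>
      have hB0 : PowerSeries.constantCoeff B' = v := by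
        rw [← PowerSeries.coeff_zero_eq_constantCoeff, hcB']
        rw [auxLinvC]
      simp only [PowerSeries.coeff_zero_eq_constantCoeff, RingHom.map_mul, RingHom.map_one]
      rw [hB0, ← ha]
      exact hva
    | succ n =>
      rw [PowerSeries.coeff_mul, Finset.Nat.sum_antidiagonal_eq_sum_range_succ_mk,
        Finset.sum_range_succ]
      rw [PowerSeries.coeff_one, if_neg (Nat.succ_ne_zero n)]
      have h1 : ∀ k ∈ Finset.range (n + 1),
          PowerSeries.coeff (k, n + 1 - k).1 B' * PowerSeries.coeff (k, n + 1 - k).2 F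
          = auxLinvC φ v k * φ (n + 1 - k) := by
        intro k hk
        show PowerSeries.coeff k B' * PowerSeries.coeff (n + 1 - k) F = _
        rw [hcB', hcF]
      rw [Finset.sum_congr rfl h1]
      have h2 : ∑ k ∈ Finset.range (n + 1), auxLinvC φ v k * φ (n + 1 - k)
          = ∑ j ∈ Finset.range (n + 1), auxLinvC φ v (n - j) * φ (j + 1) := by
        rw [← Finset.sum_range_reflect]
        apply Finset.sum_congr rfl
        intro j hj
        rw [Finset.mem_range] at hj
        have e1 : n + 1 - 1 - j = n - j := by omega
        have e2 : n + 1 - (n - j) = j + 1 := by omega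
        rw [e1, e2]
      rw [h2]
      have hlast : PowerSeries.coeff (n + 1, n + 1 - (n + 1)).1 B' *
          PowerSeries.coeff (n + 1, n + 1 - (n + 1)).2 F
          = auxLinvC φ v (n + 1) * a := by
        show PowerSeries.coeff (n + 1) B' * PowerSeries.coeff (n + 1 - (n + 1)) F = _
        rw [hcB', Nat.sub_self, PowerSeries.coeff_zero_eq_constantCoeff, ← ha]
      rw [hlast]
      rw [show auxLinvC φ v (n + 1)
          = -((∑ j ∈ Finset.range (n + 1), auxLinvC φ v (n - j) * φ (j + 1)) * v) from by
        rw [auxLinvC]]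
      set U := ∑ j ∈ Finset.range (n + 1), auxLinvC φ v (n - j) * φ (j + 1) with hU
      rw [neg_mul, mul_assoc, hva, mul_one, add_neg_cancel]
  have hBB' : B' = B := by
    calc B' = B' * (F * B) := by rw [hFB, mul_one]
    _ = (B' * F) * B := by rw [mul_assoc]
    _ = B := by rw [hB'F, one_mul]
  exact ⟨⟨F, B, hFB, hBB' ▸ hB'F⟩, rfl⟩

end Units

/-! ### Annihilator machinery -/

section Ann
variable {R : Type*} [Ring R]

def annS (c : R) : Set R := {r : R | c * r = 0}

lemma mem_annS {c r : R} : r ∈ annS c ↔ c * r = 0 := Iff.rfl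

lemma exists_max_ann (hacc : AccOnAnnihilators R) {d : R} (hd : d ≠ 0) :
    ∃ c : R, c ≠ 0 ∧ annS d ⊆ annS c ∧
      ∀ e : R, e ≠ 0 → annS c ⊆ annS e → annS e ⊆ annS c := by
  by_contra hcon
  push_neg at hcon
  choose e he0 hesub hens using hcon
  let step : {c : R // c ≠ 0 ∧ annS d ⊆ annS c} → {c : R // c ≠ 0 ∧ annS d ⊆ annS c} :=
    fun p => ⟨e p.1 p.2.1 p.2.2, he0 p.1 p.2.1 p.2.2, p.2.2.trans (hesub p.1 p.2.1 p.2.2)⟩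
  let seq : ℕ → {c : R // c ≠ 0 ∧ annS d ⊆ annS c} :=
    fun n => step^[n] ⟨d, hd, subset_rfl⟩
  have hseq : ∀ n, seq (n + 1) = step (seq n) := by
    intro n
    exact Function.iterate_succ_apply' step n _
  let f : ℕ → Set R := fun n => annS (seq n).1
  obtain ⟨N, hN⟩ := hacc f
    (fun n => ⟨{(seq n).1}, by ext r; simp [f, annS]⟩)
    (fun n => by
      show annS (seq n).1 ⊆ annS (seq (n + 1)).1
      rw [hseq n]
      exact hesub (seq n).1 (seq n).2.1 (seq n).2.2)
  have heq : f (N + 1) = f N := hN (N + 1) (by omega)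
  have hnot : ¬ annS (step (seq N)).1 ⊆ annS (seq N).1 :=
    hens (seq N).1 (seq N).2.1 (seq N).2.2
  apply hnot
  have h2 : annS (seq (N + 1)).1 ⊆ annS (seq N).1 := heq.le
  rwa [hseq N] at h2

end Ann

/-- If `R` is a reduced ring satisfying the ACC on annihilators which is left
Archimedean, then the power series ring `R[[x]]` is reduced and left Archimedean. -/
theorem powerSeries_leftArchimedean_reduced (R : Type*) [Ring R] [IsReduced R]
    (hacc : AccOnAnnihilators R) (harch : LeftArchimedean R) :
    IsReduced (PowerSeries R) ∧ LeftArchimedean (PowerSeries R) := by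
  classical
  refine ⟨aux_ps_isReduced, ?_⟩
  intro F hF
  have haF : ¬ IsUnit (PowerSeries.constantCoeff F) := fun hu =>
    hF (aux_isUnit_of_isUnit_constantCoeff F hu)
  set a : R := PowerSeries.constantCoeff F with ha
  ext g
  simp only [Set.mem_iInter, Set.mem_setOf_eq, Set.mem_singleton_iff]
  constructor
  · intro hg
    by_contra hg0
    have hex0 : ∃ k, PowerSeries.coeff k g ≠ 0 := by
      by_contra hno
      push_neg at hno
      exact hg0 (PowerSeries.ext fun n => by rw [hno n, map_zero])
    obtain ⟨k, hk⟩ := hex0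
    obtain ⟨c, hc0, hsub, hmax⟩ := exists_max_ann hacc hk
    have hcd : c * PowerSeries.coeff k g ≠ 0 := by
      intro h0
      have h1 : c ∈ annS (PowerSeries.coeff k g) := aux_red_symm h0
      have h2 : c * c = 0 := hsub h1
      exact hc0 (IsReduced.eq_zero _ ⟨2, by rwa [sq]⟩)
    have hprime : ∀ x y : R, c * (x * y) = 0 → c * x = 0 ∨ c * y = 0 := by
      intro x y hxy
      by_cases hcx : c * x = 0
      · exact Or.inl hcx
      · right
        have hsub2 : annS c ⊆ annS (c * x) := by
          intro r hr
          rw [mem_annS] at hr ⊢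
          rw [mul_assoc]
          exact aux_red_mid hr x
        exact hmax (c * x) hcx hsub2 (by rw [mem_annS, mul_assoc]; exact hxy)
    by_cases hca : c * a = 0
    · -- the constant coefficient of `F` is killed by `c`
      obtain ⟨h, hh⟩ := hg (k + 1)
      apply hcd
      rw [hh, PowerSeries.coeff_mul, Finset.mul_sum]
      apply Finset.sum_eq_zero
      rintro ⟨p, q⟩ hpq
      rw [Finset.HasAntidiagonal.mem_antidiagonal] at hpq
      rw [← mul_assoc, aux_c_pow_coeff hca (k + 1) p (by omega), zero_mul]
    · -- the constant coefficient of `F` survives multiplication by `c`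
      have hex : ∃ j, c * PowerSeries.coeff j g ≠ 0 := ⟨k, hcd⟩
      set m := Nat.find hex with hm
      have hcm : c * PowerSeries.coeff m g ≠ 0 := Nat.find_spec hex
      have hlt : ∀ j, j < m → c * PowerSeries.coeff j g = 0 := fun j hj =>
        not_not.mp (Nat.find_min hex hj)
      have hap : ∀ (n : ℕ) (y : R), c * (a ^ n * y) = 0 → c * y = 0 := by
        intro n
        induction n with
        | zero => intro y hy; simpa using hy
        | succ n ih =>
          intro y hy
          have h' : c * (a * (a ^ n * y)) = 0 := by
            rw [show a * (a ^ n * y) = a ^ (n + 1) * y from by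
              rw [← mul_assoc, ← pow_succ']]
            exact hy
          rcases hprime a (a ^ n * y) h' with h1 | h1
          · exact absurd h1 hca
          · exact ih y h1
      have hmem : PowerSeries.coeff m g * c ∈
          ⋂ n : ℕ, {x : R | ∃ r : R, x = a ^ n * r} := by
        rw [Set.mem_iInter]
        intro n
        obtain ⟨h, hh⟩ := hg n
        have Hj : ∀ j, j < m → c * PowerSeries.coeff j h = 0 := by
          intro j
          induction j using Nat.strong_induction_on with
          | _ j ihj =>
            intro hjm
            have h0 : c * PowerSeries.coeff j g = 0 := hlt j hjm
            rw [hh, PowerSeries.coeff_mul, Finset.mul_sum] at h0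
            have hsingle : ∑ p ∈ Finset.HasAntidiagonal.antidiagonal j,
                c * (PowerSeries.coeff p.1 (F ^ n) * PowerSeries.coeff p.2 h)
                = c * (PowerSeries.coeff 0 (F ^ n) * PowerSeries.coeff j h) := by
              apply Finset.sum_eq_single_of_mem (0, j)
              · rw [Finset.HasAntidiagonal.mem_antidiagonal]
                exact zero_add j
              · rintro ⟨p, q⟩ hb hne
                rw [Finset.HasAntidiagonal.mem_antidiagonal] at hb
                have hq : q < j := by
                  rcases Nat.lt_or_ge q j with h1 | h1
                  · exact h1
                  · exfalso
                    apply hne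
                    have hqj : q = j := by omega
                    have hp0 : p = 0 := by omega
                    simp [hqj, hp0]
                exact aux_red_mid (ihj q hq (hq.trans hjm)) _
            rw [hsingle, PowerSeries.coeff_zero_eq_constantCoeff, map_pow] at h0
            exact hap n _ h0
        have hmeq : c * PowerSeries.coeff m g
            = c * (a ^ n * PowerSeries.coeff m h) := by
          rw [hh, PowerSeries.coeff_mul, Finset.mul_sum]
          have hsingle : ∑ p ∈ Finset.HasAntidiagonal.antidiagonal m,
              c * (PowerSeries.coeff p.1 (F ^ n) * PowerSeries.coeff p.2 h)
              = c * (PowerSeries.coeff 0 (F ^ n) * PowerSeries.coeff m h) := by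
            apply Finset.sum_eq_single_of_mem (0, m)
            · rw [Finset.HasAntidiagonal.mem_antidiagonal]
              exact zero_add m
            · rintro ⟨p, q⟩ hb hne
              rw [Finset.HasAntidiagonal.mem_antidiagonal] at hb
              have hq : q < m := by
                rcases Nat.lt_or_ge q m with h1 | h1
                · exact h1
                · exfalso
                  apply hne
                  have hqj : q = m := by omega
                  have hp0 : p = 0 := by omega
                  simp [hqj, hp0]
              exact aux_red_mid (Hj q hq) _
          rw [hsingle, PowerSeries.coeff_zero_eq_constantCoeff, map_pow]
        refine ⟨PowerSeries.coeff m h * c, ?_⟩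
        have hz : (PowerSeries.coeff m g - a ^ n * PowerSeries.coeff m h) * c = 0 :=
          aux_red_symm (by rw [mul_sub, hmeq, sub_self])
        rw [sub_mul, sub_eq_zero] at hz
        rw [hz, mul_assoc]
      rw [harch a haF] at hmem
      exact hcm (aux_red_symm hmem)
  · intro hg0 n
    exact ⟨0, by rw [hg0, mul_zero]⟩
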